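/- If $f:\mathbb{R}^m \to \mathbb{R}$ is a nonnegative twice continuously differentiable function with second-order derivatives bounded by $M$, then $\sqrt{f}$ is Lipschitz continuous with Lipschitz constant $\sqrt{M}$. -/

import Mathlib

open Real

private lemma lipschitz_of_abs_deriv_le {g : ℝ → ℝ} {C : ℝ} (hC : 0 ≤ C)
    (hg : Differentiable ℝ g) (h : ∀ x, |deriv g x| ≤ C) :
    ∀ a b : ℝ, |g b - g a| ≤ C * |b - a| := by
  have hlip : LipschitzWith C.toNNReal g := by
    apply lipschitzWith_of_nnnorm_deriv_le hg
    intro x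
    rw [← NNReal.coe_le_coe, coe_nnnorm, Real.coe_toNNReal _ hC, Real.norm_eq_abs]
    exact h x
  intro a b
  have := hlip.dist_le_mul b a
  rwa [Real.dist_eq, Real.dist_eq, Real.coe_toNNReal _ hC] at this

private lemma key1 (φ : ℝ → ℝ) (M : ℝ) (h0 : ∀ t, 0 ≤ φ t)
    (hd : Differentiable ℝ φ) (hd2 : Differentiable ℝ (deriv φ))
    (hM : ∀ t, |deriv (deriv φ) t| ≤ M) (t : ℝ) :
    (deriv φ t) ^ 2 ≤ 2 * M * φ t := by
  have hM0 : 0 ≤ M := le_trans (abs_nonneg _) (hM 0)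
  have hlip := lipschitz_of_abs_deriv_le hM0 hd2 hM
  -- quadratic upper bound
  have key : ∀ h : ℝ, 0 ≤ M / 2 * (h * h) + deriv φ t * h + φ t := by
    intro h
    set ψ : ℝ → ℝ := fun s => φ t + deriv φ t * s + M / 2 * s ^ 2 - φ (t + s) with hψ
    have hψd : ∀ s, HasDerivAt ψ (deriv φ t + M * s - deriv φ (t + s)) s := by
      intro s
      have h1 : HasDerivAt (fun s => φ (t + s)) (deriv φ (t + s)) s := by
        simpa [Function.comp_def] using ((hd (t + s)).hasDerivAt.comp s ((hasDerivAt_id s).const_add t))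
      have ha : HasDerivAt (fun s : ℝ => deriv φ t * s) (deriv φ t) s := by
        simpa using (hasDerivAt_id s).const_mul (deriv φ t)
      have hb : HasDerivAt (fun s : ℝ => M / 2 * s ^ 2) (M * s) s := by
        have := (hasDerivAt_pow 2 s).const_mul (M / 2)
        exact this.congr_deriv (by rw [show (2:ℕ) - 1 = 1 from rfl]; push_cast; ring)
      have := (((hasDerivAt_const s (φ t)).add ha).add hb).sub h1
      exact this.congr_deriv (by ring)
    have hψdiff : Differentiable ℝ ψ := fun s => (hψd s).differentiableAt
    have hψderiv : ∀ s, deriv ψ s = deriv φ t + M * s - deriv φ (t + s) :=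
      fun s => (hψd s).deriv
    have hψ0 : ψ 0 = 0 := by simp [hψ]
    have hnonneg : ∀ s, 0 ≤ s → 0 ≤ ψ s := by
      intro s hs
      have hmono : MonotoneOn ψ (Set.Ici 0) := by
        apply monotoneOn_of_deriv_nonneg (convex_Ici 0) hψdiff.continuous.continuousOn
          hψdiff.differentiableOn
        intro x hx
        rw [interior_Ici] at hx
        rw [hψderiv]
        have hl := hlip t (t + x)
        have hxpos : (0:ℝ) < x := hx
        rw [add_sub_cancel_left, abs_of_pos hxpos] at hl
        have := (abs_le.mp hl).2
        linarith
      have := hmono (Set.self_mem_Ici) (Set.mem_Ici.mpr hs) hs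
      rwa [hψ0] at this
    have hnonpos : ∀ s, s ≤ 0 → 0 ≤ ψ s := by
      intro s hs
      have hmono : AntitoneOn ψ (Set.Iic 0) := by
        apply antitoneOn_of_deriv_nonpos (convex_Iic 0) hψdiff.continuous.continuousOn
          hψdiff.differentiableOn
        intro x hx
        rw [interior_Iic] at hx
        rw [hψderiv]
        have hl := hlip t (t + x)
        have hxneg : x < 0 := hx
        rw [add_sub_cancel_left, abs_of_neg hxneg] at hl
        have := (abs_le.mp hl).1
        linarith
      have := hmono (Set.mem_Iic.mpr hs) Set.self_mem_Iic hs
      rwa [hψ0] at this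
    have hψh : 0 ≤ ψ h := by
      rcases le_total 0 h with h' | h'
      · exact hnonneg h h'
      · exact hnonpos h h'
    have h0' := h0 (t + h)
    simp only [hψ] at hψh
    nlinarith
  have hdisc := discrim_le_zero key
  rw [discrim] at hdisc
  nlinarith [h0 t]

private lemma key2 (φ : ℝ → ℝ) (M : ℝ) (h0 : ∀ t, 0 ≤ φ t)
    (hd : Differentiable ℝ φ) (hd2 : Differentiable ℝ (deriv φ))
    (hM : ∀ t, |deriv (deriv φ) t| ≤ M) (a b : ℝ) :
    |Real.sqrt (φ b) - Real.sqrt (φ a)| ≤ Real.sqrt M * |b - a| := by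
  have hM0 : 0 ≤ M := le_trans (abs_nonneg _) (hM 0)
  have hsq := key1 φ M h0 hd hd2 hM
  have main : ∀ ε : ℝ, 0 < ε →
      |Real.sqrt (φ b + ε) - Real.sqrt (φ a + ε)| ≤ Real.sqrt M * |b - a| := by
    intro ε hε
    set g : ℝ → ℝ := fun t => Real.sqrt (φ t + ε) with hg
    have hpos : ∀ t, 0 < φ t + ε := fun t => add_pos_of_nonneg_of_pos (h0 t) hε
    have hgd : ∀ t, HasDerivAt g (deriv φ t / (2 * Real.sqrt (φ t + ε))) t := by
      intro t
      have h1 : HasDerivAt (fun t => φ t + ε) (deriv φ t) t := (hd t).hasDerivAt.add_const ε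
      have h2 := (Real.hasDerivAt_sqrt (ne_of_gt (hpos t))).comp t h1
      exact h2.congr_deriv (by ring)
    have hbd : ∀ t, |deriv g t| ≤ Real.sqrt M := by
      intro t
      rw [(hgd t).deriv]
      have h2 : 0 < Real.sqrt (φ t + ε) := Real.sqrt_pos.mpr (hpos t)
      have h1 : |deriv φ t| ≤ Real.sqrt (2 * M) * Real.sqrt (φ t + ε) := by
        rw [← Real.sqrt_mul (by positivity), ← Real.sqrt_sq_eq_abs]
        apply Real.sqrt_le_sqrt
        nlinarith [hsq t, hε.le, hM0]
      have h3 : Real.sqrt (2 * M) ≤ 2 * Real.sqrt M := by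
        rw [Real.sqrt_mul (by norm_num) M]
        have hs2 : Real.sqrt 2 ≤ 2 := by
          nlinarith [Real.sq_sqrt (show (0:ℝ) ≤ 2 by norm_num), Real.sqrt_nonneg 2]
        nlinarith [Real.sqrt_nonneg M]
      rw [abs_div, abs_of_pos (by positivity : (0:ℝ) < 2 * Real.sqrt (φ t + ε)),
        div_le_iff₀ (by positivity)]
      calc |deriv φ t| ≤ Real.sqrt (2 * M) * Real.sqrt (φ t + ε) := h1
        _ ≤ 2 * Real.sqrt M * Real.sqrt (φ t + ε) := by nlinarith [Real.sqrt_nonneg (φ t + ε)]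
        _ = Real.sqrt M * (2 * Real.sqrt (φ t + ε)) := by ring
    exact lipschitz_of_abs_deriv_le (Real.sqrt_nonneg M)
      (fun t => (hgd t).differentiableAt) hbd a b
  refine le_of_forall_pos_le_add ?_
  intro δ hδ
  have hε : (0:ℝ) < (δ / 2) ^ 2 := by positivity
  have hmain := main _ hε
  set ε := (δ / 2) ^ 2 with hεdef
  have hup : ∀ t, Real.sqrt (φ t + ε) ≤ Real.sqrt (φ t) + δ / 2 := by
    intro t
    have hb2 : φ t + ε ≤ (Real.sqrt (φ t) + δ / 2) ^ 2 := by
      have h1 := Real.sq_sqrt (h0 t)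
      nlinarith [Real.sqrt_nonneg (φ t), hδ.le]
    calc Real.sqrt (φ t + ε) ≤ Real.sqrt ((Real.sqrt (φ t) + δ / 2) ^ 2) :=
          Real.sqrt_le_sqrt hb2
      _ = Real.sqrt (φ t) + δ / 2 := Real.sqrt_sq (by positivity)
  have hlo : ∀ t, Real.sqrt (φ t) ≤ Real.sqrt (φ t + ε) :=
    fun t => Real.sqrt_le_sqrt (by linarith [hε.le])
  have h1 := (abs_le.mp hmain).1
  have h2 := (abs_le.mp hmain).2
  rw [abs_le]
  constructor
  · have := hup b
    have := hlo a
    linarith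
  · have := hup a
    have := hlo b
    linarith

theorem stmt_1 {m : ℕ} (f : EuclideanSpace ℝ (Fin m) → ℝ) (M : ℝ)
    (hf : ContDiff ℝ 2 f) (hf0 : ∀ z, 0 ≤ f z)
    (hM : ∀ z η, ‖η‖ = 1 → |fderiv ℝ (fun y => fderiv ℝ f y η) z η| ≤ M) :
    LipschitzWith (Real.toNNReal (Real.sqrt M)) (fun y => Real.sqrt (f y)) := by
  apply LipschitzWith.of_dist_le_mul
  intro p q
  rcases eq_or_ne p q with rfl | hne
  · simp
  have hv : q - p ≠ 0 := sub_ne_zero.mpr (Ne.symm hne)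
  have hr : 0 < ‖q - p‖ := norm_pos_iff.mpr hv
  set η : EuclideanSpace ℝ (Fin m) := ‖q - p‖⁻¹ • (q - p) with hηdef
  have hη : ‖η‖ = 1 := by
    rw [hηdef, norm_smul, norm_inv, norm_norm, inv_mul_cancel₀ hr.ne']
  set L : ℝ → EuclideanSpace ℝ (Fin m) := fun t => p + t • η with hLdef
  have hL : ∀ t, HasDerivAt L η t := by
    intro t
    have h1 : HasDerivAt (fun t : ℝ => t • η) η t := by
      simpa using (hasDerivAt_id t).smul_const η
    exact h1.const_add p
  have hfd : Differentiable ℝ f := hf.differentiable (by norm_num)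
  set φ : ℝ → ℝ := fun t => f (L t) with hφdef
  have hφ : ∀ t, HasDerivAt φ (fderiv ℝ f (L t) η) t :=
    fun t => (hfd (L t)).hasFDerivAt.comp_hasDerivAt t (hL t)
  set F : EuclideanSpace ℝ (Fin m) → ℝ := fun z => fderiv ℝ f z η with hFdef
  have hF1 : ContDiff ℝ 1 (fderiv ℝ f) := hf.fderiv_right (by norm_num)
  have hFd : Differentiable ℝ F :=
    (ContinuousLinearMap.apply ℝ ℝ η).differentiable.comp (hF1.differentiable (by norm_num))
  have hF : ∀ t, HasDerivAt (fun t => F (L t)) (fderiv ℝ F (L t) η) t :=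
    fun t => (hFd (L t)).hasFDerivAt.comp_hasDerivAt t (hL t)
  have hderiv : deriv φ = fun t => F (L t) := funext fun t => (hφ t).deriv
  have hd2 : Differentiable ℝ (deriv φ) := by
    rw [hderiv]; exact fun t => (hF t).differentiableAt
  have hMt : ∀ t, |deriv (deriv φ) t| ≤ M := by
    intro t
    rw [hderiv, (hF t).deriv]
    exact hM (L t) η hη
  have hle := key2 φ M (fun t => hf0 _) (fun t => (hφ t).differentiableAt) hd2 hMt 0 ‖q - p‖
  have hL0 : L 0 = p := by simp [hLdef]
  have hLr : L ‖q - p‖ = q := by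
    rw [hLdef]
    simp only [hηdef, smul_smul, mul_inv_cancel₀ hr.ne', one_smul]
    abel
  have ha : φ 0 = f p := by rw [hφdef]; simp [hL0]
  have hb : φ ‖q - p‖ = f q := by rw [hφdef]; simp [hLr]
  rw [ha, hb, sub_zero, abs_of_pos hr] at hle
  rw [Real.dist_eq, dist_eq_norm, Real.coe_toNNReal _ (Real.sqrt_nonneg M)]
  calc |Real.sqrt (f p) - Real.sqrt (f q)| = |Real.sqrt (f q) - Real.sqrt (f p)| :=
        abs_sub_comm _ _
    _ ≤ Real.sqrt M * ‖q - p‖ := hle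
    _ = Real.sqrt M * ‖p - q‖ := by rw [norm_sub_rev]
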